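/- arXiv:math/0306148 — 2 statements merged into one kernel-verified Lean document; each statement's English description precedes it below -/
import Mathlib

section
/- Let R be a commutative ring, let L and W be ideals of R, let M be an ideal of R, and let x ∈ M. Assume L : x² = L : x and xW = (0). Then for every integer n ≥ 2, (L + (xⁿ) + W) : M = ((L + W) : M) + ((L + (xⁿ)) : M). -/
open Ideal IsLocalRing

/-- A sequence `x₁, …, x_s` is a `d`-sequence. -/
def IsDSeq {R : Type*} [CommRing R] {s : ℕ} (x : Fin s → R) : Prop :=
  ∀ i j : Fin s, i ≤ j →
    (Ideal.span (x '' {k | k < i})).colon (Ideal.span {x i}) =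
    (Ideal.span (x '' {k | k < i})).colon (Ideal.span {x i * x j})

/-- A strong `d`-sequence: all power sequences are `d`-sequences. -/
def IsStrongDSeq {R : Type*} [CommRing R] {s : ℕ} (x : Fin s → R) : Prop :=
  ∀ n : Fin s → ℕ, (∀ i, 1 ≤ n i) → IsDSeq (fun i => x i ^ n i)

/-- `x₁, …, x_d` is a system of parameters of the local ring `A`. -/
def IsSOP {A : Type*} [CommRing A] [IsLocalRing A] {d : ℕ} (x : Fin d → A) : Prop :=
  ringKrullDim A = d ∧ (Ideal.span (Set.range x)).radical = maximalIdeal A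

/-- `Q` is a parameter ideal: generated by a system of parameters. -/
def IsParameterIdeal (A : Type*) [CommRing A] [IsLocalRing A] (Q : Ideal A) : Prop :=
  ∃ (d : ℕ) (x : Fin d → A), IsSOP x ∧ Q = Ideal.span (Set.range x)

/-- A Buchsbaum local ring: every system of parameters is a weak `A`-sequence. -/
def IsBuchsbaum (A : Type*) [CommRing A] [IsLocalRing A] : Prop :=
  ∀ (d : ℕ) (x : Fin d → A), IsSOP x →
    ∀ i : Fin d,
      (Ideal.span (x '' {k | k < i})).colon (Ideal.span {x i}) =
      (Ideal.span (x '' {k | k < i})).colon (maximalIdeal A)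

/-- The 0-th local cohomology `H⁰_𝔪(A)`, as the ideal of elements killed by a power of `𝔪`. -/
noncomputable def H0 (A : Type*) [CommRing A] [IsLocalRing A] : Ideal A :=
  ⨆ n : ℕ, (⊥ : Ideal A).colon ((maximalIdeal A) ^ n : Ideal A)

/-- The length of a module, as the Krull dimension of its submodule lattice (valued in `ℕ∞`). -/
noncomputable def moduleLength (R M : Type*) [Ring R] [AddCommGroup M] [Module R M] : ℕ∞ :=
  WithBot.unbotD 0 (Order.krullDim (Submodule R M))

/-- `ℓ_A(I/Q)`: the length of `I/Q`. -/
noncomputable def quotLength {A : Type*} [CommRing A] (Q I : Ideal A) : ℕ∞ :=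
  moduleLength (A ⧸ Q) (I.map (Ideal.Quotient.mk Q))

/-- `r(A)`: the supremum of the indices of reducibility of parameter ideals. -/
noncomputable def typeR (A : Type*) [CommRing A] [IsLocalRing A] : ℕ∞ :=
  ⨆ Q ∈ {Q : Ideal A | IsParameterIdeal A Q}, quotLength Q (Q.colon (maximalIdeal A))

/-- The reduction number `r_Q(I) = min{n ≥ 0 ∣ I^{n+1} = Q Iⁿ}`. -/
noncomputable def reductionNumber {A : Type*} [CommRing A] (Q I : Ideal A) : ℕ :=
  sInf {n : ℕ | I ^ (n + 1) = Q * I ^ n}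

/-- `x` is integral over the ideal `Q`. -/
def IsIntegralOverIdeal {A : Type*} [CommRing A] (Q : Ideal A) (x : A) : Prop :=
  ∃ n : ℕ, 0 < n ∧ ∃ c : ℕ → A, (∀ i ∈ Finset.Icc 1 n, c i ∈ Q ^ i) ∧
    x ^ n + ∑ i ∈ Finset.Icc 1 n, c i * x ^ (n - i) = 0

/-- `A` has Hilbert–Samuel multiplicity `e` (with respect to its maximal ideal). -/
def HasHSMultiplicity (A : Type*) [CommRing A] [IsLocalRing A] (e : ℕ) : Prop :=
  ∃ d : ℕ, ringKrullDim A = d ∧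
    Filter.Tendsto
      (fun n : ℕ =>
        ((d.factorial : ℝ) * ((moduleLength A (A ⧸ (maximalIdeal A) ^ n)).toNat : ℝ)) / (n : ℝ) ^ d)
      Filter.atTop (nhds (e : ℝ))

/-- The local ring `A` has depth `n`. -/
def HasDepth (A : Type*) [CommRing A] [IsLocalRing A] (n : ℕ) : Prop :=
  (∃ rs : List A, rs.length = n ∧ (∀ a ∈ rs, a ∈ maximalIdeal A) ∧
      RingTheory.Sequence.IsRegular A rs) ∧
    ∀ rs : List A, (∀ a ∈ rs, a ∈ maximalIdeal A) → RingTheory.Sequence.IsRegular A rs →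
      rs.length ≤ n

theorem stmt0 {R : Type*} [CommRing R] (L W M : Ideal R) (x : R) (hx : x ∈ M)
    (hcolon : L.colon (Ideal.span {x ^ 2}) = L.colon (Ideal.span {x}))
    (hxW : ∀ w ∈ W, x * w = 0) (n : ℕ) (hn : 2 ≤ n) :
    (L + Ideal.span {x ^ n} + W).colon M =
      (L + W).colon M + (L + Ideal.span {x ^ n}).colon M := by
  -- descending powers lemma
  have hdesc : ∀ (j : ℕ) (a : R), a * x ^ (j + 1) ∈ L → a * x ∈ L := by
    intro j
    induction j with
    | zero => intro a h; simpa using h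
    | succ j ih =>
      intro a h
      apply ih
      have h2 : a * x ^ j ∈ L.colon (Ideal.span {x ^ 2}) := by
        rw [Ideal.mem_colon_span_singleton]
        have : a * x ^ j * x ^ 2 = a * x ^ (j + 2) := by ring
        rwa [this]
      rw [hcolon, Ideal.mem_colon_span_singleton] at h2
      have : a * x ^ j * x = a * x ^ (j + 1) := by ring
      rwa [this] at h2
  obtain ⟨k, rfl⟩ : ∃ k, n = k + 2 := ⟨n - 2, by omega⟩
  simp only [Submodule.add_eq_sup]
  apply le_antisymm
  · intro a ha
    rw [Submodule.mem_colon] at ha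
    -- decomposition of a * x
    obtain ⟨u, hu, w₀, hw₀, hax⟩ := Submodule.mem_sup.mp (by simpa using ha x hx)
    obtain ⟨l₀, hl₀, t, ht, hu'⟩ := Submodule.mem_sup.mp hu
    obtain ⟨b, hb⟩ := Ideal.mem_span_singleton'.mp ht
    have e1 : a * x = l₀ + b * x ^ (k + 2) + w₀ := by
      rw [← hax, ← hu', hb]
    have hw₀x : x * w₀ = 0 := hxW w₀ hw₀
    have main : ∀ m ∈ M, (a - b * x ^ (k + 1)) * m ∈ L ⊔ W ∧
        (b * x ^ (k + 1)) * m ∈ L ⊔ Ideal.span {x ^ (k + 2)} := by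
      intro m hm
      obtain ⟨u, hu, w₁, hw₁, ham⟩ := Submodule.mem_sup.mp (by simpa using ha m hm)
      obtain ⟨l₁, hl₁, t, ht, hu'⟩ := Submodule.mem_sup.mp hu
      obtain ⟨c, hc⟩ := Ideal.mem_span_singleton'.mp ht
      have e2 : a * m = l₁ + c * x ^ (k + 2) + w₁ := by
        rw [← ham, ← hu', hc]
      have hw₁x : x * w₁ = 0 := hxW w₁ hw₁
      have key1 : (b * m - c * x) * x ^ (k + 3) = (l₁ * x - l₀ * m) * x := by
        linear_combination x ^ 2 * e2 - x * m * e1 - m * hw₀x + x * hw₁x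
      have hk1 : (b * m - c * x) * x ^ (k + 3) ∈ L := by
        rw [key1]
        exact Ideal.mul_mem_right _ _ (sub_mem (Ideal.mul_mem_right _ _ hl₁)
          (Ideal.mul_mem_right _ _ hl₀))
      have hk2 : (b * m - c * x) * x ∈ L := hdesc _ _ hk1
      have key2 : b * m * x ^ (k + 1) - c * x ^ (k + 2) ∈ L := by
        have := Ideal.mul_mem_right (x ^ k) _ hk2
        have heq : (b * m - c * x) * x * x ^ k = b * m * x ^ (k + 1) - c * x ^ (k + 2) := by
          ring
        rwa [heq] at this
      constructor
      · refine Submodule.mem_sup.mpr ⟨l₁ - (b * m * x ^ (k + 1) - c * x ^ (k + 2)), ?_, w₁,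
          hw₁, ?_⟩
        · exact sub_mem hl₁ key2
        · rw [sub_mul, e2]; ring
      · refine Submodule.mem_sup.mpr ⟨b * m * x ^ (k + 1) - c * x ^ (k + 2), key2,
          c * x ^ (k + 2), Ideal.mem_span_singleton'.mpr ⟨c, rfl⟩, by ring⟩
    refine Submodule.mem_sup.mpr ⟨a - b * x ^ (k + 1), ?_, b * x ^ (k + 1), ?_, by ring⟩
    · rw [Submodule.mem_colon]
      intro m hm
      rw [smul_eq_mul]
      exact (main m hm).1
    · rw [Submodule.mem_colon]
      intro m hm
      rw [smul_eq_mul]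
      exact (main m hm).2
  · apply sup_le
    · exact Submodule.colon_mono (sup_le_sup_right le_sup_left _) le_rfl
    · exact Submodule.colon_mono le_sup_left le_rfl
end

section
/- Let (A, 𝔪) be a one-dimensional Noetherian local ring and let Q = (a) be a parameter ideal (i.e., a is a system of parameters, so a is not in any minimal prime and Q is 𝔪-primary). Set I = Q : 𝔪. If Q = 𝔪·I, then the multiplicity e(A) of A equals 1. -/
open Ideal IsLocalRing

section AuxProof

open Order
open scoped Classical

/-- If `f : M →ₗ P` is surjective with atomic (simple) kernel, chains in `M` are at most one
longer than their images. -/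
lemma aux_height_le_of_surj {R : Type*} [Ring R] {M P : Type*} [AddCommGroup M] [Module R M]
    [AddCommGroup P] [Module R P] (f : M →ₗ[R] P) (hf : Function.Surjective f)
    (hatom : IsAtom (LinearMap.ker f)) :
    Order.height (⊤ : Submodule R M) ≤ Order.height (⊤ : Submodule R P) + 1 := by
  set K := LinearMap.ker f with hK
  have key : ∀ (n : ℕ) (p : LTSeries (Submodule R M)), p.length = n →
      (p.length : ℕ∞) ≤ Order.height (Submodule.map f p.last)
        + (if p.last ⊓ K = ⊥ then 0 else 1) := by
    intro n
    induction n with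
    | zero =>
      intro p hp
      rw [hp]
      exact le_add_right zero_le
    | succ n ih =>
      intro p hp
      have hlen0 : p.length ≠ 0 := by omega
      set q := p.eraseLast with hq
      have hqlen : q.length = n := by
        simp [hq, RelSeries.eraseLast_length, hp]
      have hlt : q.last < p.last := p.eraseLast_last_rel_last hlen0
      have IH := ih q hqlen
      rw [hqlen] at IH
      rw [hp]
      by_cases hmap : Submodule.map f q.last = Submodule.map f p.last
      · -- sup equal, so inf strictly increases inside atom K
        have hsup : p.last ⊔ K ≤ q.last ⊔ K := by
          rw [hK, ← Submodule.comap_map_eq f q.last, ← Submodule.comap_map_eq f p.last, hmap]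
        have hinf : q.last ⊓ K < p.last ⊓ K := inf_lt_inf_of_lt_of_sup_le_sup hlt hsup
        have hqbot : q.last ⊓ K = ⊥ := by
          have : q.last ⊓ K < K := lt_of_lt_of_le hinf inf_le_right
          exact hatom.2 _ this
        have hpbot : ¬ (p.last ⊓ K = ⊥) := by
          intro h
          rw [h] at hinf
          exact (not_lt_bot hinf)
        rw [if_neg hpbot, ← hmap]
        rw [if_pos hqbot, add_zero] at IH
        push_cast
        exact add_le_add_left IH 1
      · have hmaplt : Submodule.map f q.last < Submodule.map f p.last :=
          lt_of_le_of_ne (Submodule.map_mono hlt.le) hmap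
        have hcost : (if q.last ⊓ K = ⊥ then (0:ℕ∞) else 1) ≤
            (if p.last ⊓ K = ⊥ then (0:ℕ∞) else 1) := by
          by_cases hp' : p.last ⊓ K = ⊥
          · have : q.last ⊓ K = ⊥ := by
              have := inf_le_inf_right K hlt.le
              rw [hp'] at this
              exact le_bot_iff.mp this
            simp [hp', this]
          · simp only [if_neg hp']
            split <;> simp
        by_cases htop : Order.height (Submodule.map f q.last) = ⊤
        · have : Order.height (Submodule.map f p.last) = ⊤ :=
            top_le_iff.mp (htop ▸ Order.height_mono hmaplt.le)
          rw [this]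
          simp
        · have hstep : Order.height (Submodule.map f q.last) + 1 ≤
              Order.height (Submodule.map f p.last) :=
            (ENat.add_one_le_iff htop).mpr
              (Order.height_strictMono hmaplt (lt_top_iff_ne_top.mpr htop))
          calc ((n+1 : ℕ) : ℕ∞) = (n : ℕ∞) + 1 := by push_cast; ring
            _ ≤ (Order.height (Submodule.map f q.last)
                  + (if q.last ⊓ K = ⊥ then 0 else 1)) + 1 := add_le_add_left IH 1
            _ = (Order.height (Submodule.map f q.last) + 1)
                  + (if q.last ⊓ K = ⊥ then 0 else 1) := by ring
            _ ≤ Order.height (Submodule.map f p.last)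
                  + (if p.last ⊓ K = ⊥ then 0 else 1) := add_le_add hstep hcost
  apply Order.height_le
  intro p hplast
  have := key p.length p rfl
  rw [hplast] at this
  have hmt : Submodule.map f (⊤ : Submodule R M) = ⊤ := by
    rw [Submodule.map_top, LinearMap.range_eq_top]
    exact hf
  rw [hmt] at this
  refine this.trans (add_le_add_right ?_ _)
  split <;> simp

lemma aux_height_ge_of_surj {R : Type*} [Ring R] {M P : Type*} [AddCommGroup M] [Module R M]
    [AddCommGroup P] [Module R P] (f : M →ₗ[R] P) (hf : Function.Surjective f)
    (hker : LinearMap.ker f ≠ ⊥) :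
    Order.height (⊤ : Submodule R P) + 1 ≤ Order.height (⊤ : Submodule R M) := by
  have hcomap : StrictMono (fun (N : Submodule R P) => Submodule.comap f N) :=
    Monotone.strictMono_of_injective (fun _ _ h => Submodule.comap_mono h)
      (Submodule.comap_injective_of_surjective hf)
  have main : ∀ (q : LTSeries (Submodule R P)), q.last = ⊤ →
      (q.length : ℕ∞) + 1 ≤ Order.height (⊤ : Submodule R M) := by
    intro q hq
    have hhead : (⊥ : Submodule R M) < (q.map (fun (N : Submodule R P) => Submodule.comap f N) hcomap).head := by
      rw [LTSeries.head_map]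
      exact lt_of_lt_of_le hker.bot_lt (by simpa using Submodule.comap_mono bot_le)
    let p := (q.map (fun (N : Submodule R P) => Submodule.comap f N) hcomap).cons ⊥ hhead
    have hlast : p.last = ⊤ := by
      show ((q.map (fun (N : Submodule R P) => Submodule.comap f N) hcomap).cons ⊥ hhead).last = ⊤
      rw [RelSeries.last_cons, LTSeries.last_map, hq, Submodule.comap_top]
    have hlen : p.length = q.length + 1 := by
      show ((q.map (fun (N : Submodule R P) => Submodule.comap f N) hcomap).cons ⊥ hhead).length = _
      simp
    have := Order.length_le_height_last (p := p)
    rw [hlast, hlen] at this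
    exact_mod_cast this
  rcases eq_or_ne (Order.height (⊤ : Submodule R P)) ⊤ with htop | hne
  · rw [htop]
    have : ∀ n : ℕ, (n : ℕ∞) ≤ Order.height (⊤ : Submodule R M) := by
      intro n
      obtain ⟨q, hq, hqlen⟩ := Order.exists_series_of_le_height (⊤ : Submodule R P)
        (n := n) (by rw [htop]; exact le_top)
      have := main q hq
      rw [hqlen] at this
      exact le_trans (by simp) this
    have : Order.height (⊤ : Submodule R M) = ⊤ := by
      rcases eq_or_ne (Order.height (⊤ : Submodule R M)) ⊤ with h | h
      · exact h
      · lift Order.height (⊤ : Submodule R M) to ℕ using h with m hm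
        have := this (m + 1)
        exact_mod_cast absurd this (by exact_mod_cast (by omega : ¬ (m + 1 : ℕ) ≤ m))
    rw [this]
    simp
  · lift Order.height (⊤ : Submodule R P) to ℕ using hne with m hm
    obtain ⟨q, hq, hqlen⟩ := Order.exists_series_of_height_eq_coe (⊤ : Submodule R P) hm.symm
    have := main q hq
    rw [hqlen] at this
    exact_mod_cast this

lemma aux_coatom_step {R : Type*} [Ring R] {M : Type*} [AddCommGroup M] [Module R M]
    (N : Submodule R M) (hco : IsCoatom N) :
    Order.height (⊤ : Submodule R M) ≤ Order.height (⊤ : Submodule R ↥N) + 1 := by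
  have key : ∀ (n : ℕ) (p : LTSeries (Submodule R M)), p.length = n →
      (p.length : ℕ∞) ≤ Order.height (Submodule.comap N.subtype p.last)
        + (if p.last ≤ N then 0 else 1) := by
    intro n
    induction n with
    | zero =>
      intro p hp
      rw [hp]
      exact le_add_right zero_le
    | succ n ih =>
      intro p hp
      have hlen0 : p.length ≠ 0 := by omega
      set q := p.eraseLast with hq
      have hqlen : q.length = n := by simp [hq, RelSeries.eraseLast_length, hp]
      have hlt : q.last < p.last := p.eraseLast_last_rel_last hlen0
      have IH := ih q hqlen
      rw [hqlen] at IH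
      rw [hp]
      by_cases hmap : Submodule.comap N.subtype q.last = Submodule.comap N.subtype p.last
      · -- infs equal, so sups strictly increase inside [N, ⊤], so q.last ≤ N, ¬ p.last ≤ N
        have hinfeq : N ⊓ q.last = N ⊓ p.last := by
          rw [← Submodule.map_comap_subtype, ← Submodule.map_comap_subtype, hmap]
        have hsup : q.last ⊔ N < p.last ⊔ N :=
          sup_lt_sup_of_lt_of_inf_le_inf hlt
            (by rw [inf_comm p.last N, ← hinfeq, inf_comm])
        have hqN : q.last ⊔ N = N := by
          rcases (eq_or_lt_of_le (le_sup_right : N ≤ q.last ⊔ N)) with h | h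
          · exact h.symm
          · exact absurd (hco.2 _ h) (by intro hh; rw [hh] at hsup; exact not_top_lt hsup)
        have hpN : ¬ p.last ≤ N := by
          intro hh
          rw [sup_eq_right.mpr hh] at hsup
          rw [hqN] at hsup
          exact lt_irrefl _ hsup
        have hqle : q.last ≤ N := sup_eq_right.mp hqN
        rw [if_neg hpN, ← hmap]
        rw [if_pos hqle, add_zero] at IH
        push_cast
        exact add_le_add_left IH 1
      · have hmaplt : Submodule.comap N.subtype q.last < Submodule.comap N.subtype p.last :=
          lt_of_le_of_ne (Submodule.comap_mono hlt.le) hmap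
        have hcost : (if q.last ≤ N then (0:ℕ∞) else 1) ≤ (if p.last ≤ N then (0:ℕ∞) else 1) := by
          by_cases hp' : p.last ≤ N
          · simp [hp', hlt.le.trans hp']
          · simp only [if_neg hp']; split <;> simp
        by_cases htop : Order.height (Submodule.comap N.subtype q.last) = ⊤
        · have : Order.height (Submodule.comap N.subtype p.last) = ⊤ :=
            top_le_iff.mp (htop ▸ Order.height_mono hmaplt.le)
          rw [this]; simp
        · have hstep : Order.height (Submodule.comap N.subtype q.last) + 1 ≤
              Order.height (Submodule.comap N.subtype p.last) :=
            (ENat.add_one_le_iff htop).mpr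
              (Order.height_strictMono hmaplt (lt_top_iff_ne_top.mpr htop))
          calc ((n+1 : ℕ) : ℕ∞) = (n : ℕ∞) + 1 := by push_cast; ring
            _ ≤ (Order.height (Submodule.comap N.subtype q.last)
                  + (if q.last ≤ N then 0 else 1)) + 1 := add_le_add_left IH 1
            _ = (Order.height (Submodule.comap N.subtype q.last) + 1)
                  + (if q.last ≤ N then 0 else 1) := by ring
            _ ≤ _ := add_le_add hstep hcost
  apply Order.height_le
  intro p hplast
  have := key p.length p rfl
  rw [hplast] at this
  have hmt : Submodule.comap N.subtype (⊤ : Submodule R M) = ⊤ := by simp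
  rw [hmt] at this
  refine this.trans (add_le_add_right ?_ _)
  split <;> simp

universe u

lemma aux_height_lt_top {R : Type*} [Ring R] {M : Type u} [AddCommGroup M] [Module R M]
    (h : IsFiniteLength R M) : Order.height (⊤ : Submodule R M) < ⊤ := by
  induction h with
  | of_subsingleton =>
    rename_i M' _ _ _
    have : Subsingleton (Submodule R M') := inferInstance
    have h0 : Order.height (⊤ : Submodule R M') = 0 :=
      Order.height_eq_zero.mpr (fun b _ => (Subsingleton.elim ⊤ b).le)
    rw [h0]
    simp
  | of_simple_quotient hfin ih =>
    rename_i M' i1 i2 N i3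
    have hco : IsCoatom N := isSimpleModule_iff_isCoatom.mp i3
    have := aux_coatom_step N hco
    refine lt_of_le_of_lt this ?_
    have h1 : Order.height (⊤ : Submodule R ↥N) < ⊤ := ih
    exact ENat.add_lt_top.mpr ⟨h1, lt_top_iff_ne_top.mpr (by simp)⟩

lemma aux_semisimple {R M : Type*} [CommRing R] [AddCommGroup M] [Module R M]
    (I : Ideal R) (hI : I.IsMaximal)
    (hann : ∀ r ∈ I, ∀ x : M, r • x = 0) : IsSemisimpleModule R M := by
  apply IsSemisimpleModule.of_sSup_simples_eq_top
  rw [eq_top_iff]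
  intro x _
  rcases eq_or_ne x 0 with rfl | hx
  · exact Submodule.zero_mem _
  · have hsimple : IsSimpleModule R (Submodule.span R {x}) := by
      rw [isSimpleModule_iff_isAtom]
      constructor
      · simpa using hx
      · intro b hb
        by_contra hbne
        obtain ⟨y, hyb, hy0⟩ := (Submodule.ne_bot_iff b).mp hbne
        have hyx : y ∈ Submodule.span R {x} := hb.le hyb
        obtain ⟨r, hr⟩ := Submodule.mem_span_singleton.mp hyx
        have hrI : r ∉ I := fun hrm => hy0 (by rw [← hr, hann r hrm x])
        -- the ideal J = {s | s • x ∈ b} contains I and r, hence is ⊤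
        set J : Submodule R R := Submodule.comap (LinearMap.toSpanSingleton R M x) b with hJ
        have hIJ : I ≤ J := fun s hs => by
          simp only [hJ, Submodule.mem_comap, LinearMap.toSpanSingleton_apply]
          rw [hann s hs x]; exact b.zero_mem
        have hrJ : r ∈ J := by
          simp only [hJ, Submodule.mem_comap, LinearMap.toSpanSingleton_apply]
          rw [hr]; exact hyb
        by_cases hJtop : (J : Ideal R) = ⊤
        · have h1 : (1 : R) ∈ J := by rw [hJtop]; trivial
          have hxb : x ∈ b := by
            simpa [hJ, Submodule.mem_comap, LinearMap.toSpanSingleton_apply] using h1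
          exact hb.ne (le_antisymm hb.le (Submodule.span_le.mpr (by simpa using hxb)))
        · exact hrI ((hI.eq_of_le hJtop hIJ) ▸ hrJ)
    exact le_sSup (show Submodule.span R {x} ∈ {m : Submodule R M | IsSimpleModule R m} from hsimple)
      (Submodule.mem_span_singleton_self x)

lemma aux_artinian {A : Type*} [CommRing A] [IsLocalRing A] [IsNoetherianRing A] (n : ℕ) :
    IsArtinian A (A ⧸ (maximalIdeal A ^ n : Ideal A)) := by
  induction n with
  | zero =>
    have : Subsingleton (A ⧸ (maximalIdeal A ^ 0 : Ideal A)) := by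
      rw [pow_zero]
      exact Submodule.Quotient.subsingleton_iff.mpr (by simp [Ideal.one_eq_top])
    infer_instance
  | succ n ihA =>
    set m : Ideal A := maximalIdeal A
    have hle : (m ^ (n + 1) : Ideal A) ≤ m ^ n := Ideal.pow_le_pow_right (by omega)
    set S : Submodule A (A ⧸ (m ^ (n+1) : Ideal A)) := Submodule.map (m ^ (n+1)).mkQ (m ^ n)
      with hS
    have hSfg : S.FG := Submodule.FG.map _ (IsNoetherian.noetherian _)
    have hfin : Module.Finite A S := Module.Finite.iff_fg.mpr hSfg
    have hsemi : IsSemisimpleModule A S := by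
      apply aux_semisimple (maximalIdeal A) inferInstance
      rintro r hr ⟨x, hx⟩
      obtain ⟨y, hy, rfl⟩ := hx
      apply Subtype.ext
      show r • Submodule.Quotient.mk y = 0
      rw [← Submodule.Quotient.mk_smul, Submodule.Quotient.mk_eq_zero]
      show r • y ∈ (m ^ (n+1) : Ideal A)
      rw [smul_eq_mul, pow_succ']
      exact Ideal.mul_mem_mul hr hy
    have hart : IsArtinian A S := inferInstance
    have hquot : IsArtinian A ((A ⧸ (m ^ (n+1) : Ideal A)) ⧸ S) := by
      have e := Submodule.quotientQuotientEquivQuotient (m ^ (n+1) : Ideal A) (m ^ n) hle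
      exact isArtinian_of_linearEquiv e.symm
    exact (isArtinian_iff_submodule_quotient S).mpr ⟨hart, hquot⟩

lemma aux_moduleLength_eq {R M : Type*} [Ring R] [AddCommGroup M] [Module R M] :
    moduleLength R M = Order.height (⊤ : Submodule R M) := by
  rw [moduleLength, ← Order.height_top_eq_krullDim]
  rfl

lemma aux_dim0 {A : Type*} [CommRing A] [IsLocalRing A]
    (h : maximalIdeal A ≤ Ideal.radical ⊥) : ringKrullDim A = 0 := by
  have hmp : (maximalIdeal A).IsPrime := (maximalIdeal.isMaximal A).isPrime
  have huniq : ∀ p : PrimeSpectrum A, p = ⟨maximalIdeal A, hmp⟩ := by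
    intro p
    have h1 : p.asIdeal ≤ maximalIdeal A := le_maximalIdeal p.2.ne_top
    have h2 : maximalIdeal A ≤ p.asIdeal := by
      refine h.trans ?_
      have := nilradical_le_prime (J := p.asIdeal)
      simpa [nilradical] using this
    exact PrimeSpectrum.ext (le_antisymm h1 h2)
  haveI : Unique (PrimeSpectrum A) := ⟨⟨⟨maximalIdeal A, hmp⟩⟩, huniq⟩
  rw [ringKrullDim]
  exact Order.krullDim_eq_zero_of_unique

end AuxProof

theorem stmt5 {A : Type*} [CommRing A] [IsLocalRing A] [IsNoetherianRing A]
    (hdim : ringKrullDim A = 1) (a : A)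
    (hQ : IsParameterIdeal A (Ideal.span {a}))
    (h : Ideal.span {a} = maximalIdeal A * ((Ideal.span {a}).colon (maximalIdeal A))) :
    HasHSMultiplicity A 1 := by
  obtain ⟨d, x, ⟨hdimd, hradx⟩, hspan⟩ := hQ
  have hrad : (Ideal.span {a}).radical = maximalIdeal A := by rw [hspan]; exact hradx
  clear hdimd hspan hradx
  classical
  set m : Ideal A := maximalIdeal A with hm
  have hdim0 : ¬ (m ≤ Ideal.radical (⊥ : Ideal A)) := by
    intro hle
    have h0 := aux_dim0 hle
    rw [h0] at hdim
    norm_num at hdim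
  have hznz : ∀ z : A, Ideal.radical (Ideal.span {z}) = m → ∀ j : ℕ, z ^ j ≠ 0 := by
    intro z hz j hj
    apply hdim0
    rw [← hz]
    have hzle : Ideal.span {z} ≤ Ideal.radical (⊥ : Ideal A) := by
      rw [Ideal.span_le]
      intro t ht
      rcases ht with rfl
      exact ⟨j, by simpa using hj⟩
    exact le_trans (Ideal.radical_mono hzle) (le_of_eq (Ideal.radical_idem _))
  have ha0 : a ≠ 0 := fun h0 => hznz a hrad 1 (by simpa using h0)
  -- step 1
  have ha_not : a ∉ m * Ideal.span {a} := by
    intro hmem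
    obtain ⟨z, hz, hza⟩ := Ideal.mem_mul_span_singleton.mp hmem
    have h1 : (1 - z) * a = 0 := by
      have : z * a = a := hza
      rw [sub_mul, one_mul, this, sub_self]
    have hu : IsUnit (1 - z) := isUnit_one_sub_self_of_mem_nonunits z hz
    obtain ⟨v, hv⟩ := hu
    apply ha0
    have := congrArg (fun t => (↑v⁻¹ : A) * t) h1
    simpa [← hv, mul_assoc] using this
  -- step 2
  set I : Ideal A := (Ideal.span {a}).colon m with hI
  have hmI : ∃ z ∈ m, ∃ y ∈ I, z * y ∉ m * Ideal.span {a} := by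
    by_contra hcon
    push_neg at hcon
    have hle : m * I ≤ m * Ideal.span {a} := Ideal.mul_le.mpr hcon
    exact ha_not (hle (h ▸ Ideal.mem_span_singleton_self a))
  obtain ⟨z, hzm, y, hyI, hzy⟩ := hmI
  have hzyQ : z * y ∈ Ideal.span {a} := by
    have := Submodule.mem_colon.mp hyI z hzm
    rw [smul_eq_mul] at this
    rw [mul_comm]
    exact this
  obtain ⟨r, hr⟩ := Ideal.mem_span_singleton'.mp hzyQ
  have hrm : r ∉ m := fun hrmem =>
    hzy (by rw [← hr]; exact Ideal.mul_mem_mul hrmem (Ideal.mem_span_singleton_self a))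
  have hru : IsUnit r := by
    by_contra hnu
    exact hrm ((mem_maximalIdeal r).mpr hnu)
  obtain ⟨u, hu⟩ := hru
  set c : A := (↑u⁻¹ : A) * z with hc
  set f : A := y with hf
  have hcm : c ∈ m := Ideal.mul_mem_left _ _ hzm
  have hcf : c * f = a := by
    calc c * f = (↑u⁻¹ : A) * (z * y) := by rw [hc]; ring
      _ = (↑u⁻¹ : A) * (↑u * a) := by rw [← hr, hu]
      _ = a := by rw [← mul_assoc, Units.inv_mul, one_mul]
  -- W
  set W : Ideal A := (⊥ : Ideal A).colon (Ideal.span {f}) with hW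
  have hWmem : ∀ w : A, w ∈ W ↔ w * f = 0 := by
    intro w
    rw [hW, Submodule.mem_colon]
    constructor
    · intro hh
      have := hh f (Ideal.mem_span_singleton_self f)
      simpa [smul_eq_mul] using this
    · intro hh p hp
      obtain ⟨s, hs⟩ := Ideal.mem_span_singleton'.mp hp
      rw [← hs, smul_eq_mul]
      have he : w * (s * f) = s * (w * f) := by ring
      rw [he, hh, mul_zero]
      exact Submodule.zero_mem _
  have hfnz : f ≠ 0 := fun h0 => ha0 (by rw [← hcf, h0, mul_zero])
  have hWm : W ≤ m := by
    apply le_maximalIdeal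
    intro hWt
    have h1 : (1 : A) ∈ W := by rw [hWt]; trivial
    rw [hWmem] at h1
    exact hfnz (by simpa using h1)
  -- 3a
  have h3a : m ≤ Ideal.span {c} ⊔ W := by
    intro t ht
    have htf : t * f ∈ Ideal.span {a} := by
      have := Submodule.mem_colon.mp hyI t ht
      rw [smul_eq_mul] at this
      rw [mul_comm]
      exact this
    obtain ⟨s, hs⟩ := Ideal.mem_span_singleton'.mp htf
    have hw : (t - s * c) ∈ W := by
      rw [hWmem]
      have he : (t - s*c) * f = t*f - s*(c*f) := by ring
      rw [he, hcf, ← hs]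
      ring
    have he : t = s * c + (t - s * c) := by ring
    rw [he]
    exact Submodule.add_mem _
      (Ideal.mem_sup_left (Ideal.mem_span_singleton'.mpr ⟨s, rfl⟩))
      (Ideal.mem_sup_right hw)
  -- 3b
  obtain ⟨k, hk⟩ := Ideal.exists_pow_le_of_le_radical_of_fg (le_of_eq hrad.symm)
    (IsNoetherian.noetherian m)
  -- 3c
  have haW : ∀ w ∈ W, a * w = 0 := by
    intro w hw
    have he : a * w = c * (w * f) := by rw [← hcf]; ring
    rw [he, (hWmem w).mp hw, mul_zero]
  have hmW : ∀ n, k ≤ n → m ^ n * W = ⊥ := by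
    intro n hn
    rw [eq_bot_iff]
    have h1 : m ^ n ≤ Ideal.span {a} := le_trans (Ideal.pow_le_pow_right hn) hk
    refine le_trans (Ideal.mul_mono h1 le_rfl) ?_
    refine Ideal.mul_le.mpr ?_
    intro p hp w hw
    obtain ⟨s, hs⟩ := Ideal.mem_span_singleton'.mp hp
    rw [← hs]
    have he : s * a * w = s * (a * w) := by ring
    rw [he, haW w hw, mul_zero]
    exact Submodule.zero_mem _
  -- induction
  have hind : ∀ n : ℕ, m ^ (n+1) ≤ Ideal.span {c} ^ (n+1) ⊔ m ^ n * W := by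
    intro n
    induction n with
    | zero => simpa [Ideal.top_mul] using h3a
    | succ n ih =>
      have he : m ^ (n+2) = m * m ^ (n+1) := (pow_succ' m (n+1))
      rw [he]
      refine le_trans (Ideal.mul_mono h3a ih) ?_
      rw [Ideal.sup_mul, Ideal.mul_sup, Ideal.mul_sup]
      have hcc : Ideal.span {c} * Ideal.span {c} ^ (n+1) = Ideal.span {c} ^ (n+2) :=
        (pow_succ' (Ideal.span {c}) (n+1)).symm
      have hcle : Ideal.span {c} ≤ m := by
        rw [Ideal.span_le]; intro t ht; rcases ht with rfl; exact hcm
      have h1 : Ideal.span {c} * (m ^ n * W) ≤ m ^ (n+1) * W := by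
        rw [← mul_assoc]
        exact Ideal.mul_mono (by rw [pow_succ']; exact Ideal.mul_mono hcle le_rfl) le_rfl
      have h2 : W * Ideal.span {c} ^ (n+1) ≤ m ^ (n+1) * W := by
        rw [mul_comm]
        exact Ideal.mul_mono (pow_le_pow_left' hcle (n+1)) le_rfl
      have h3 : W * (m ^ n * W) ≤ m ^ (n+1) * W := by
        rw [show W * (m ^ n * W) = m ^ n * (W * W) by ring,
            show (m:Ideal A) ^ (n+1) * W = m ^ n * (m * W) by ring]
        exact Ideal.mul_mono le_rfl (Ideal.mul_mono hWm le_rfl)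
      refine sup_le (sup_le ?_ ?_) (sup_le ?_ ?_)
      · rw [hcc]; exact le_sup_left
      · exact le_trans h1 le_sup_right
      · exact le_trans h2 le_sup_right
      · exact le_trans h3 le_sup_right
  have hpow : ∀ n, k + 1 ≤ n → (m ^ n : Ideal A) = Ideal.span {c ^ n} := by
    intro n hn
    apply le_antisymm
    · obtain ⟨n', rfl⟩ : ∃ n', n = n' + 1 := ⟨n - 1, by omega⟩
      have := hind n'
      rw [hmW n' (by omega)] at this
      simpa [Ideal.span_singleton_pow] using this
    · rw [Ideal.span_le]
      intro t ht
      rcases ht with rfl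
      exact Ideal.pow_mem_pow hcm n
  have hradc : Ideal.radical (Ideal.span {c}) = m := by
    apply le_antisymm
    · have h1 : Ideal.span {c} ≤ m := by
        rw [Ideal.span_le]; intro t ht; rcases ht with rfl; exact hcm
      calc Ideal.radical (Ideal.span {c}) ≤ Ideal.radical m := Ideal.radical_mono h1
        _ = m := (maximalIdeal.isMaximal A).isPrime.radical
    · have h1 : Ideal.span {a} ≤ Ideal.span {c} := by
        rw [Ideal.span_le]
        intro t ht
        rcases ht with rfl
        exact Ideal.mem_span_singleton'.mpr ⟨f, by rw [mul_comm]; exact hcf⟩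
      calc m = Ideal.radical (Ideal.span {a}) := hrad.symm
        _ ≤ Ideal.radical (Ideal.span {c}) := Ideal.radical_mono h1
  have hcnz : ∀ n : ℕ, c ^ n ≠ 0 := hznz c hradc
  have hneq : ∀ n : ℕ, (m ^ n : Ideal A) ≠ m ^ (n+1) := by
    intro n heq
    have hfg : (m ^ n : Ideal A).FG := IsNoetherian.noetherian _
    have hsm : (m ^ n : Ideal A) ≤ m • (m ^ n : Ideal A) := by
      rw [smul_eq_mul, ← pow_succ']
      exact le_of_eq heq
    have hbot := Submodule.eq_bot_of_le_smul_of_le_jacobson_bot m (m ^ n) hfg hsm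
      (maximalIdeal_le_jacobson ⊥)
    exact hcnz n (by simpa [hbot] using Ideal.pow_mem_pow hcm n)
  -- the step lemma: for n ≥ k+1 the length grows by exactly 1
  have hstep : ∀ n, k + 1 ≤ n →
      Order.height (⊤ : Submodule A (A ⧸ (m^(n+1) : Ideal A)))
        = Order.height (⊤ : Submodule A (A ⧸ (m^n : Ideal A))) + 1 := by
    intro n hn
    have hle : (m^(n+1) : Ideal A) ≤ m^n := Ideal.pow_le_pow_right (by omega)
    set F : (A ⧸ (m^(n+1) : Ideal A)) →ₗ[A] (A ⧸ (m^n : Ideal A)) :=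
      Submodule.mapQ _ _ LinearMap.id (by simpa using hle) with hF
    have hFsurj : Function.Surjective F := by
      intro zz
      obtain ⟨x, rfl⟩ := Submodule.Quotient.mk_surjective _ zz
      exact ⟨Submodule.Quotient.mk x, by rw [hF, Submodule.mapQ_apply]; rfl⟩
    have hker : LinearMap.ker F = Submodule.map (m^(n+1) : Ideal A).mkQ (m^n : Ideal A) := by
      apply le_antisymm
      · intro zz hzz
        obtain ⟨x, rfl⟩ := Submodule.Quotient.mk_surjective _ zz
        rw [LinearMap.mem_ker, hF, Submodule.mapQ_apply, LinearMap.id_apply,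
          Submodule.Quotient.mk_eq_zero] at hzz
        exact ⟨x, hzz, rfl⟩
      · rintro zz ⟨x, hx, rfl⟩
        rw [LinearMap.mem_ker]
        show F (Submodule.Quotient.mk x) = 0
        rw [hF, Submodule.mapQ_apply, LinearMap.id_apply, Submodule.Quotient.mk_eq_zero]
        exact hx
    have hatom : IsAtom (LinearMap.ker F) := by
      rw [hker]
      constructor
      · intro hbot
        apply hneq n
        apply le_antisymm _ hle
        intro t ht
        have : (m^(n+1) : Ideal A).mkQ t ∈ Submodule.map (m^(n+1) : Ideal A).mkQ (m^n : Ideal A) :=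
          ⟨t, ht, rfl⟩
        rw [hbot, Submodule.mem_bot] at this
        rwa [Submodule.mkQ_apply, Submodule.Quotient.mk_eq_zero] at this
      · intro b hb
        by_contra hbne
        obtain ⟨yy, hyb, hy0⟩ := (Submodule.ne_bot_iff b).mp hbne
        obtain ⟨x, hx, rfl⟩ := hb.le hyb
        rw [hpow n hn] at hx
        obtain ⟨r, hrx⟩ := Ideal.mem_span_singleton'.mp hx
        have hrm : r ∉ m := by
          intro hrm
          apply hy0
          rw [Submodule.mkQ_apply, Submodule.Quotient.mk_eq_zero, ← hrx]
          have : r * c ^ n ∈ m * m ^ n := Ideal.mul_mem_mul hrm (by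
            rw [hpow n hn]; exact Ideal.mem_span_singleton_self _)
          rwa [← pow_succ'] at this
        have hru : IsUnit r := by
          by_contra hnu
          exact hrm ((mem_maximalIdeal r).mpr hnu)
        obtain ⟨u, hu⟩ := hru
        have hcnb : (m^(n+1) : Ideal A).mkQ (c ^ n) ∈ b := by
          have h1 : (m^(n+1) : Ideal A).mkQ (c ^ n)
              = (↑u⁻¹ : A) • (m^(n+1) : Ideal A).mkQ x := by
            rw [← map_smul, smul_eq_mul, ← hrx, ← mul_assoc, ← hu, Units.inv_mul, one_mul]
          rw [h1]
          exact b.smul_mem _ hyb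
        apply hb.ne
        apply le_antisymm hb.le
        have hKspan : Submodule.map (m^(n+1) : Ideal A).mkQ (m^n : Ideal A)
            = Submodule.span A {(m^(n+1) : Ideal A).mkQ (c ^ n)} := by
          rw [hpow n hn]
          show Submodule.map _ (Submodule.span A {c ^ n}) = _
          rw [Submodule.map_span, Set.image_singleton]
        rw [hKspan, Submodule.span_le, Set.singleton_subset_iff]
        exact hcnb
    exact le_antisymm (aux_height_le_of_surj F hFsurj hatom) (aux_height_ge_of_surj F hFsurj hatom.1)
  -- assemble
  set N : ℕ := k + 1 with hN
  set g : ℕ → ℕ∞ := fun n => Order.height (⊤ : Submodule A (A ⧸ (m^n : Ideal A))) with hg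
  have hgfin : g N < ⊤ := by
    have hfl : IsFiniteLength A (A ⧸ (m^N : Ideal A)) :=
      isFiniteLength_iff_isNoetherian_isArtinian.mpr ⟨inferInstance, aux_artinian N⟩
    exact aux_height_lt_top hfl
  have hval : ∀ j : ℕ, g (N + j) = g N + j := by
    intro j
    induction j with
    | zero => simp
    | succ j ih =>
      have h1 : N + (j + 1) = (N + j) + 1 := by omega
      calc g (N + (j+1))
          = Order.height (⊤ : Submodule A (A ⧸ (m^((N+j)+1) : Ideal A))) := by rw [h1]
        _ = Order.height (⊤ : Submodule A (A ⧸ (m^(N+j) : Ideal A))) + 1 :=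
            hstep (N + j) (by omega)
        _ = g (N + j) + 1 := rfl
        _ = (g N + j) + 1 := by rw [ih]
        _ = g N + ((j+1 : ℕ) : ℕ∞) := by push_cast; ring
  set L0 : ℕ := (g N).toNat with hL0
  have hbase : g N = (L0 : ℕ∞) := (ENat.coe_toNat (ne_top_of_lt hgfin)).symm
  unfold HasHSMultiplicity
  refine ⟨1, by exact_mod_cast hdim, ?_⟩
  have hmod : ∀ n : ℕ, moduleLength A (A ⧸ (m^n : Ideal A)) = g n := fun n => aux_moduleLength_eq
  have htoNat : ∀ j : ℕ, (g (N + j)).toNat = L0 + j := by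
    intro j
    rw [hval j, hbase]
    rw [show ((L0 : ℕ∞) + (j:ℕ∞)) = ((L0 + j : ℕ) : ℕ∞) from (Nat.cast_add L0 j).symm]
    exact ENat.toNat_coe _
  have hlim : Filter.Tendsto (fun n : ℕ => 1 + ((L0:ℝ) - N)/(n:ℝ)) Filter.atTop (nhds 1) := by
    have h0 := tendsto_const_div_atTop_nhds_zero_nat ((L0:ℝ) - N)
    have := (tendsto_const_nhds (x := (1:ℝ)) (f := Filter.atTop (α := ℕ))).add h0
    simpa using this
  have hcongr : (fun n : ℕ => 1 + ((L0:ℝ) - N)/(n:ℝ)) =ᶠ[Filter.atTop]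
      (fun n : ℕ => ((Nat.factorial 1 : ℝ) *
        (((moduleLength A (A ⧸ (m^n : Ideal A))).toNat : ℕ) : ℝ)) / (n:ℝ)^1) := by
    filter_upwards [Filter.eventually_ge_atTop (N+1)] with n hn
    have htn : (moduleLength A (A ⧸ (m^n : Ideal A))).toNat = L0 + (n - N) := by
      rw [hmod]
      have := htoNat (n - N)
      rwa [Nat.add_sub_cancel' (by omega : N ≤ n)] at this
    have hn0 : (n:ℝ) ≠ 0 := Nat.cast_ne_zero.mpr (by omega)
    rw [htn, Nat.factorial_one, pow_one]
    push_cast [Nat.cast_sub (show N ≤ n by omega)]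
    field_simp
    ring
  have := hlim.congr' hcongr
  simpa using this
end
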